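/- Let p be a prime with p ≡ 1 (mod 4), and let b be an integer with Legendre symbol ((b²−4)/p) = −1. Then v_k(−b,1) ≢ 0 (mod p) for every positive integer k. -/

import Mathlib

open Polynomial

/-- Companion Lucas sequence: `v 0 = 2`, `v 1 = A`, `v (n+2) = A·v (n+1) − B·v n`. -/
def lucasV (A B : ℤ) : ℕ → ℤ
  | 0 => 2
  | 1 => A
  | n + 2 => A * lucasV A B (n + 1) - B * lucasV A B n

theorem lucasV_not_dvd (p : ℕ) [Fact p.Prime] (hp4 : p % 4 = 1) (b : ℤ)
    (hb : legendreSym p (b ^ 2 - 4) = -1) :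
    ∀ k : ℕ, 0 < k → ¬ (p : ℤ) ∣ lucasV (-b) 1 k := by
  intro k hk hdvd
  have hp := Fact.out (p := p.Prime)
  have hp5 : 5 ≤ p := by
    have := hp.two_le
    rcases Nat.lt_or_ge p 5 with h | h
    · interval_cases p <;> omega
    · exact h
  -- nonsquare discriminant
  have hns : ¬ IsSquare (((b ^ 2 - 4 : ℤ) : ZMod p)) := (legendreSym.eq_neg_one_iff p).mp hb
  set b' : ZMod p := (b : ZMod p) with hb'
  have hns' : ¬ IsSquare (b' ^ 2 - 4 : ZMod p) := by
    have : ((b ^ 2 - 4 : ℤ) : ZMod p) = b' ^ 2 - 4 := by push_cast; ring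
    rwa [this] at hns
  -- the quadratic polynomial
  set f : (ZMod p)[X] := X ^ 2 + C b' * X + 1 with hf
  have hfm : f.Monic := by unfold f; monicity!
  have hfdeg : f.natDegree = 2 := by unfold f; compute_degree!
  have hfroots : f.roots = 0 := by
    rw [Multiset.eq_zero_iff_forall_notMem]
    intro r hr
    rw [mem_roots hfm.ne_zero] at hr
    have hr' : r ^ 2 + b' * r + 1 = 0 := by
      simpa [hf, IsRoot, eval_add, eval_mul, eval_pow] using hr
    exact hns' ⟨2 * r + b', by linear_combination (-4 : ZMod p) * hr'⟩
  have hirr : Irreducible f :=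
    (hfm.irreducible_iff_roots_eq_zero_of_degree_le_three (by omega) (by omega)).mpr hfroots
  haveI : Fact (Irreducible f) := ⟨hirr⟩
  -- the quadratic extension
  set F := AdjoinRoot f with hF
  haveI : CharP F p := charP_of_injective_algebraMap (algebraMap (ZMod p) F).injective p
  set α : F := AdjoinRoot.root f with hαdef
  set c : F := algebraMap (ZMod p) F b' with hcdef
  have hα : α ^ 2 + c * α + 1 = 0 := by
    have h0 := AdjoinRoot.eval₂_root f
    rw [hf] at h0
    simp [AdjoinRoot.algebraMap_eq, eval₂_add, eval₂_mul, eval₂_pow, eval₂_X, eval₂_C,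
      eval₂_one] at h0
    exact h0
  set β : F := -c - α with hβdef
  have hprod : α * β = 1 := by rw [hβdef]; linear_combination -hα
  have hcb : ((b : ℤ) : F) = c := by
    rw [hcdef, hb']
    exact (map_intCast (algebraMap (ZMod p) F) b).symm
  -- the Lucas sequence in F
  have key : ∀ n : ℕ, ((lucasV (-b) 1 n : ℤ) : F) = α ^ n + β ^ n := by
    intro n
    induction n using Nat.strong_induction_on with
    | _ n ih =>
      match n with
      | 0 => norm_num [lucasV]
      | 1 =>
        show ((-b : ℤ) : F) = α ^ 1 + β ^ 1
        push_cast
        rw [hcb, hβdef]; ring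
      | (m + 2) =>
        have h1 := ih (m + 1) (by omega)
        have h2 := ih m (by omega)
        show (((-b) * lucasV (-b) 1 (m + 1) - 1 * lucasV (-b) 1 m : ℤ) : F) = _
        rw [Int.cast_sub, Int.cast_mul, Int.cast_mul, Int.cast_neg, Int.cast_one]
        rw [hcb, h1, h2, hβdef]
        linear_combination (α ^ m + (-c - α) ^ m) * hprod
  -- p ∣ v k gives α^k + β^k = 0
  have hcast : ((lucasV (-b) 1 k : ℤ) : F) = 0 := by
    obtain ⟨t, ht⟩ := hdvd
    rw [ht]
    rw [Int.cast_mul, Int.cast_natCast]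
    rw [CharP.cast_eq_zero F p, zero_mul]
  have hk0 : α ^ k + β ^ k = 0 := by rw [← key, hcast]
  have h2k : α ^ (2 * k) = -1 := by
    have hab : (α * β) ^ k = 1 := by rw [hprod, one_pow]
    have hneg : α ^ k = -β ^ k := eq_neg_of_add_eq_zero_left hk0
    calc α ^ (2 * k) = α ^ k * α ^ k := by rw [two_mul, pow_add]
      _ = -(α ^ k * β ^ k) := by rw [hneg]; ring
      _ = -1 := by rw [← mul_pow, hab]
  -- Frobenius: α^p is a root of the quadratic
  have hcp : c ^ p = c := by
    rw [hcdef, ← map_pow, ZMod.pow_card]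
  have hfr : (α ^ p) ^ 2 + c * α ^ p + 1 = 0 := by
    have h := congrArg (frobenius F p) hα
    set_option synthInstance.maxHeartbeats 1000000 in
    simp only [map_add, map_mul, map_pow, map_one, map_zero, frobenius_def] at h
    rw [hcp] at h
    exact h
  have hroots2 : α ^ p = α ∨ α ^ p = β := by
    have h0 : (α ^ p - α) * (α ^ p - β) = 0 := by
      rw [hβdef]
      linear_combination hfr - hα
    rcases mul_eq_zero.mp h0 with h | h
    · exact Or.inl (sub_eq_zero.mp h)
    · exact Or.inr (sub_eq_zero.mp h)
  -- rule out α^p = α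
  have hfix : α ^ p ≠ α := by
    intro hfe
    have haev : (Polynomial.aeval α) ((X : (ZMod p)[X]) ^ p - X) = 0 := by
      rw [map_sub, map_pow, aeval_X, hfe, sub_self]
    have hmin : minpoly (ZMod p) α = f := by
      rw [hαdef, AdjoinRoot.minpoly_root hfm.ne_zero, hfm.leadingCoeff, inv_one, map_one,
        mul_one]
    have hdvd2 : f ∣ (X : (ZMod p)[X]) ^ p - X := by
      rw [← hmin]
      exact minpoly.dvd (ZMod p) α haev
    have hsplits : Splits ((X : (ZMod p)[X]) ^ p - X) := by
      rw [splits_iff_card_roots]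
      have hq : Fintype.card (ZMod p) = p := ZMod.card p
      have hroots := FiniteField.roots_X_pow_card_sub_X (ZMod p)
      rw [hq] at hroots
      rw [hroots, FiniteField.X_pow_card_sub_X_natDegree_eq (ZMod p) hp.one_lt]
      simpa using (ZMod.card p)
    have hne : ((X : (ZMod p)[X]) ^ p - X) ≠ 0 :=
      FiniteField.X_pow_card_sub_X_ne_zero (ZMod p) hp.one_lt
    have hfsplits : Splits f :=
      Splits.of_dvd hsplits hne hdvd2
    obtain ⟨r, hr⟩ := Splits.exists_eval_eq_zero hfsplits (by
      rw [degree_eq_natDegree hfm.ne_zero, hfdeg]; exact (by norm_num))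
    have : r ∈ f.roots := by
      rw [mem_roots hfm.ne_zero]
      simpa using hr
    rw [hfroots] at this
    simp at this
  have hpβ : α ^ p = β := hroots2.resolve_left hfix
  have hp1 : α ^ (p + 1) = 1 := by
    rw [pow_add, pow_one, hpβ, mul_comm]
    exact hprod
  -- derive the contradiction
  obtain ⟨t, ht⟩ : ∃ t, p = 4 * t + 1 := ⟨p / 4, by omega⟩
  have hfinal : (-1 : F) = 1 := by
    calc (-1 : F) = (α ^ (2 * k)) ^ (2 * t + 1) := by
          rw [h2k, Odd.neg_one_pow ⟨t, by ring⟩]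
      _ = (α ^ (p + 1)) ^ k := by
          rw [← pow_mul, ← pow_mul]
          congr 1
          subst ht
          ring
      _ = 1 := by rw [hp1, one_pow]
  have h20 : ((2 : ℕ) : F) = 0 := by
    push_cast
    linear_combination -hfinal
  have := (CharP.cast_eq_zero_iff F p 2).mp h20
  have := Nat.le_of_dvd (by norm_num) this
  omega
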